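/- Let M be a matrix of full rank type, let G be a nonempty finite set of squarefree monomials of A containing the variable a_{i_0} for some index i_0, and let J be the ideal of A generated by G. Then: (1) if every element of G is divisible by a_{i_0} (i.e. J ⊆ (a_{i_0})), then dim_ℂ (A/(J + I_M))_k = 1 for every integer k ≥ 0; (2) if some element m of G satisfies a_{i_0} ∤ m and deg m ≤ k, then dim_ℂ (A/(J + I_M))_k = 0. -/

import Mathlib

open scoped BigOperators

/-- The dimension of the degree-`k` homogeneous component of `A/K`:
`dim_ℂ A_k − dim_ℂ (K ∩ A_k)`. -/
noncomputable def hdim {ν : ℕ} (K : Ideal (MvPolynomial (Fin ν) ℂ)) (k : ℕ) : ℕ :=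
  Module.finrank ℂ (MvPolynomial.homogeneousSubmodule (Fin ν) ℂ k) -
    Module.finrank ℂ
      (Submodule.restrictScalars ℂ K ⊓ MvPolynomial.homogeneousSubmodule (Fin ν) ℂ k :
        Submodule ℂ (MvPolynomial (Fin ν) ℂ))

/-- A `(ν−2)×ν` complex matrix is of full rank type if every `(ν−2)×(ν−2)` minor is nonzero. -/
def FullRankType (ν : ℕ) (M : Matrix (Fin (ν - 2)) (Fin ν) ℂ) : Prop :=
  ∀ g : Fin (ν - 2) ↪ Fin ν, (M.submatrix id g).det ≠ 0

/-- The ideal `I_M` generated by the `ν−2` linear forms `ℓ_j = Σ_i M_{j,i}·a_i`. -/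
noncomputable def IM {ν : ℕ} (M : Matrix (Fin (ν - 2)) (Fin ν) ℂ) :
    Ideal (MvPolynomial (Fin ν) ℂ) :=
  Ideal.span (Set.range fun j : Fin (ν - 2) =>
    ∑ i, MvPolynomial.C (M j i) * MvPolynomial.X i)

/-- A squarefree monomial: each variable occurs with exponent 0 or 1. -/
def IsSqfreeMonomial {ν : ℕ} (p : MvPolynomial (Fin ν) ℂ) : Prop :=
  ∃ T : Finset (Fin ν), p = ∏ i ∈ T, MvPolynomial.X i


section Helpers

open MvPolynomial Matrix

variable {ν : ℕ}


lemma mydeg_add (a b : Fin ν →₀ ℕ) : (a + b).degree = a.degree + b.degree := by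
  simp [Finsupp.degree_eq_weight_one, map_add]

lemma mydeg_single (i : Fin ν) : (Finsupp.single i 1).degree = 1 := by
  exact Finsupp.degree_single i 1

instance hsfin (k : ℕ) : FiniteDimensional ℂ (homogeneousSubmodule (Fin ν) ℂ k) := by
  rw [homogeneousSubmodule_eq_finsupp_supported]
  have hfin : {d : Fin ν →₀ ℕ | d.degree = k}.Finite :=
    (Finsupp.finite_of_degree_le k).subset (fun d hd => le_of_eq hd)
  haveI := hfin.to_subtype
  exact (AddMonoidAlgebra.supportedEquivFinsupp {d : Fin ν →₀ ℕ | d.degree = k}).symm.finiteDimensional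

lemma span_mono (k : ℕ) (N : Submodule ℂ (MvPolynomial (Fin ν) ℂ))
    (hmon : ∀ d : Fin ν →₀ ℕ, d.degree = k → (monomial d 1 : MvPolynomial (Fin ν) ℂ) ∈ N) :
    homogeneousSubmodule (Fin ν) ℂ k ≤ N := by
  intro f hf
  rw [← f.support_sum_monomial_coeff]
  refine Submodule.sum_mem _ (fun d hd => ?_)
  have h1 : (monomial d (coeff d f) : MvPolynomial (Fin ν) ℂ) = coeff d f • monomial d 1 := by
    rw [smul_monomial, smul_eq_mul, mul_one]
  rw [h1]
  refine Submodule.smul_mem _ _ (hmon d ?_)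
  have := (mem_homogeneousSubmodule k f).1 hf (mem_support_iff.1 hd)
  simpa [Finsupp.degree_eq_weight_one, Pi.one_def] using this


lemma exists_v (hν : 3 ≤ ν) (M : Matrix (Fin (ν - 2)) (Fin ν) ℂ)
    (hM : FullRankType ν M) (i₀ : Fin ν) :
    ∃ v : Fin ν → ℂ, v i₀ = 0 ∧ (∀ i, i ≠ i₀ → v i ≠ 0) ∧ M.mulVec v = 0 ∧
      (∀ w : Fin ν → ℂ, w ⬝ᵥ v = 0 → ∀ K : Ideal (MvPolynomial (Fin ν) ℂ),
        X i₀ ∈ K → IM M ≤ K → (∑ i, w i • X i) ∈ K) := by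
  classical
  -- a nonzero kernel vector
  set Φ : (Fin ν → ℂ) →ₗ[ℂ] ((Fin (ν-2) → ℂ) × ℂ) :=
    LinearMap.prod M.mulVecLin (LinearMap.proj i₀) with hΦ
  have hker : LinearMap.ker Φ ≠ ⊥ := by
    intro h
    have hinj : Function.Injective Φ := LinearMap.ker_eq_bot.1 h
    have := LinearMap.finrank_le_finrank_of_injective hinj
    rw [Module.finrank_pi, Module.finrank_prod, Module.finrank_pi, Module.finrank_self] at this
    simp only [Fintype.card_fin] at this
    omega
  obtain ⟨v, hvmem, hv0⟩ := Submodule.exists_mem_ne_zero_of_ne_bot hker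
  have hvker : M.mulVec v = 0 ∧ v i₀ = 0 := by
    have := hvmem
    rw [LinearMap.mem_ker, hΦ] at this
    exact ⟨congrArg Prod.fst this, congrArg Prod.snd this⟩
  -- the submatrix trick
  have subm : ∀ i₂ : Fin ν, i₂ ≠ i₀ → ∃ g : Fin (ν-2) ↪ Fin ν,
      (∀ s, g s ≠ i₀ ∧ g s ≠ i₂) ∧ (∀ i : Fin ν, i ≠ i₀ → i ≠ i₂ → ∃ s, g s = i) := by
    intro i₂ hi₂
    set S : Finset (Fin ν) := ({i₀, i₂} : Finset (Fin ν))ᶜ with hS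
    have hcard : S.card = ν - 2 := by
      rw [Finset.card_compl, Finset.card_insert_of_notMem (by simp [Ne.symm hi₂]),
        Finset.card_singleton, Fintype.card_fin]
    refine ⟨(S.orderEmbOfFin hcard).toEmbedding, fun s => ?_, fun i h1 h2 => ?_⟩
    · have h := S.orderEmbOfFin_mem hcard s
      simp only [hS, Finset.mem_compl, Finset.mem_insert, Finset.mem_singleton] at h
      push_neg at h
      exact h
    · have hiS : i ∈ S := by simp [hS, h1, h2]
      have hr := Finset.range_orderEmbOfFin S hcard
      have : i ∈ Set.range ⇑(S.orderEmbOfFin hcard) := by rw [hr]; exact Finset.mem_coe.2 hiS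
      obtain ⟨s, hs⟩ := this
      exact ⟨s, hs⟩
  -- (ii): all other coordinates nonzero
  have hvne : ∀ i, i ≠ i₀ → v i ≠ 0 := by
    intro i₂ hi₂ hzero
    obtain ⟨g, hg1, hg2⟩ := subm i₂ hi₂
    have hdet := hM g
    have hmv : (M.submatrix id g).mulVec (v ∘ g) = 0 := by
      ext j
      have hfull : M.mulVec v j = 0 := congrFun hvker.1 j
      simp only [Matrix.mulVec, dotProduct] at hfull ⊢
      have h1 : ∑ s, M.submatrix id g j s * (v ∘ g) s
          = ∑ i ∈ Finset.univ.map g, M j i * v i := by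
        rw [Finset.sum_map]; rfl
      have h2 : ∑ i ∈ Finset.univ.map g, M j i * v i = ∑ i, M j i * v i := by
        refine Finset.sum_subset (Finset.subset_univ _) (fun i _ hi => ?_)
        have : v i = 0 := by
          by_cases e1 : i = i₀
          · rw [e1]; exact hvker.2
          by_cases e2 : i = i₂
          · rw [e2]; exact hzero
          obtain ⟨s, hs⟩ := hg2 i e1 e2
          exact absurd (Finset.mem_map.2 ⟨s, Finset.mem_univ s, hs⟩) hi
        rw [this, mul_zero]
      rw [Pi.zero_apply, h1, h2]
      exact hfull
    have hvg := Matrix.eq_zero_of_mulVec_eq_zero hdet hmv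
    apply hv0
    funext i
    by_cases e1 : i = i₀
    · rw [e1]; exact hvker.2
    by_cases e2 : i = i₂
    · rw [e2]; exact hzero
    obtain ⟨s, hs⟩ := hg2 i e1 e2
    rw [← hs]
    exact congrFun hvg s
  -- pick i₂ ≠ i₀
  have hlt : 1 < ν := by omega
  obtain ⟨i₂, hi₂⟩ : ∃ i₂ : Fin ν, i₂ ≠ i₀ := by
    by_cases h : i₀ = ⟨0, by omega⟩
    · exact ⟨⟨1, by omega⟩, by rw [h]; intro hc; exact absurd (congrArg Fin.val hc) (by simp)⟩
    · exact ⟨⟨0, by omega⟩, fun hc => h hc.symm⟩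
  obtain ⟨g, hg1, hg2⟩ := subm i₂ hi₂
  -- the map Ψ
  set Ψ : ((Fin (ν-2) → ℂ) × ℂ) →ₗ[ℂ] (Fin ν → ℂ) :=
    LinearMap.coprod M.vecMulLinear (LinearMap.toSpanSingleton ℂ _ (Pi.single i₀ (1:ℂ)))
    with hΨ
  have hΨapp : ∀ (c : Fin (ν-2) → ℂ) (c₀ : ℂ), Ψ (c, c₀) = Matrix.vecMul c M + c₀ • (Pi.single i₀ (1:ℂ) : Fin ν → ℂ) := by
    intro c c₀
    simp [hΨ, LinearMap.coprod_apply, Matrix.vecMulLinear, LinearMap.toSpanSingleton,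
      LinearMap.smulRight_apply]
  have hΨinj : Function.Injective Ψ := by
    rw [← LinearMap.ker_eq_bot]
    rw [Submodule.eq_bot_iff]
    rintro ⟨c, c₀⟩ hmem
    rw [LinearMap.mem_ker, hΨapp] at hmem
    have hsub : Matrix.vecMul c (M.submatrix id g) = 0 := by
      ext s
      have := congrFun hmem (g s)
      simp only [Pi.add_apply, Pi.smul_apply, Pi.zero_apply, smul_eq_mul,
        Pi.single_apply] at this
      rw [if_neg ((hg1 s).1)] at this
      simp only [mul_zero, add_zero] at this
      simpa [Matrix.vecMul, dotProduct, Matrix.submatrix] using this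
    have hdet := hM g
    have hunit : IsUnit (M.submatrix id g) :=
      (Matrix.isUnit_iff_isUnit_det _).2 (isUnit_iff_ne_zero.2 hdet)
    have hc : c = 0 := by
      have hinj := Matrix.vecMul_injective_iff_isUnit.2 hunit
      have : Matrix.vecMul c (M.submatrix id g) = Matrix.vecMul 0 (M.submatrix id g) := by
        rw [hsub, Matrix.zero_vecMul]
      exact hinj this
    have hc₀ : c₀ = 0 := by
      have := congrFun hmem i₀
      rw [hc] at this
      simpa [Matrix.zero_vecMul] using this
    simp [hc, hc₀, Prod.ext_iff]
  -- dot with v functional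
  set dotv : (Fin ν → ℂ) →ₗ[ℂ] ℂ :=
    ∑ i, v i • (LinearMap.proj i : (Fin ν → ℂ) →ₗ[ℂ] ℂ) with hdv
  have hdotv : ∀ w, dotv w = v ⬝ᵥ w := by
    intro w
    simp [hdv, LinearMap.sum_apply, dotProduct]
  have hrtop : LinearMap.range dotv = ⊤ := by
    rw [eq_top_iff]
    intro x _
    refine ⟨(x * (v i₂)⁻¹) • (Pi.single i₂ (1:ℂ) : Fin ν → ℂ), ?_⟩
    rw [LinearMap.map_smul, hdotv]
    have : v ⬝ᵥ (Pi.single i₂ (1:ℂ) : Fin ν → ℂ) = v i₂ := by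
      simp [dotProduct, Pi.single_apply]
    rw [this, smul_eq_mul]
    field_simp [hvne i₂ hi₂]
  have hkerfin : Module.finrank ℂ (LinearMap.ker dotv) = ν - 1 := by
    have h := LinearMap.finrank_range_add_finrank_ker dotv
    rw [hrtop, finrank_top, Module.finrank_self, Module.finrank_pi] at h
    simp only [Fintype.card_fin] at h
    omega
  have hranfin : Module.finrank ℂ (LinearMap.range Ψ) = ν - 1 := by
    rw [LinearMap.finrank_range_of_inj hΨinj, Module.finrank_prod, Module.finrank_pi,
      Module.finrank_self]
    simp only [Fintype.card_fin]
    omega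
  have hle : LinearMap.range Ψ ≤ LinearMap.ker dotv := by
    rintro _ ⟨⟨c, c₀⟩, rfl⟩
    rw [LinearMap.mem_ker, hdotv, hΨapp]
    rw [dotProduct_add]
    have h1 : v ⬝ᵥ Matrix.vecMul c M = 0 := by
      rw [dotProduct_comm, ← dotProduct_mulVec, hvker.1, dotProduct_zero]
    have h2 : v ⬝ᵥ (c₀ • (Pi.single i₀ (1:ℂ) : Fin ν → ℂ)) = 0 := by
      simp [dotProduct, Pi.single_apply, Finset.sum_ite_eq', hvker.2]
    rw [h1, h2, add_zero]
  have heq : LinearMap.range Ψ = LinearMap.ker dotv :=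
    Submodule.eq_of_le_of_finrank_le hle (by rw [hkerfin, hranfin])
  refine ⟨v, hvker.2, hvne, hvker.1, ?_⟩
  intro w hw K hXK hIMK
  have hwker : w ∈ LinearMap.ker dotv := by
    rw [LinearMap.mem_ker, hdotv, dotProduct_comm]
    exact hw
  rw [← heq] at hwker
  obtain ⟨⟨c, c₀⟩, hc⟩ := hwker
  rw [hΨapp] at hc
  have hsmulK : ∀ (a : ℂ) (p : MvPolynomial (Fin ν) ℂ), p ∈ K → a • p ∈ K := by
    intro a p hp
    rw [smul_eq_C_mul]
    exact K.mul_mem_left _ hp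
  have hform : (∑ i, w i • (X i : MvPolynomial (Fin ν) ℂ))
      = (∑ j, c j • (∑ i, C (M j i) * X i)) + c₀ • (X i₀ : MvPolynomial (Fin ν) ℂ) := by
    rw [← hc]
    have expand : ∀ i : Fin ν, (Matrix.vecMul c M + c₀ • (Pi.single i₀ (1:ℂ) : Fin ν → ℂ)) i • (X i : MvPolynomial (Fin ν) ℂ)
        = (∑ j, c j • (C (M j i) * X i)) + (c₀ * (Pi.single i₀ (1:ℂ) : Fin ν → ℂ) i) • (X i : MvPolynomial (Fin ν) ℂ) := by
      intro i
      rw [Pi.add_apply, add_smul]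
      congr 1
      · rw [Matrix.vecMul, dotProduct, Finset.sum_smul]
        refine Finset.sum_congr rfl (fun j _ => ?_)
        rw [smul_eq_C_mul, smul_eq_C_mul, C_mul, mul_assoc]
    rw [Finset.sum_congr rfl (fun i _ => expand i), Finset.sum_add_distrib]
    congr 1
    · rw [Finset.sum_comm]
      refine Finset.sum_congr rfl (fun j _ => ?_)
      rw [Finset.smul_sum]
    · simp [Pi.single_apply, ite_smul, mul_ite, mul_one, mul_zero, zero_smul,
        Finset.sum_ite_eq']
  rw [hform]
  refine K.add_mem (Submodule.sum_mem _ (fun j _ => ?_)) (hsmulK _ _ hXK)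
  refine hsmulK _ _ (hIMK ?_)
  exact Ideal.subset_span ⟨j, rfl⟩


lemma keyB (v : Fin ν → ℂ) (i₁ : Fin ν) (K : Ideal (MvPolynomial (Fin ν) ℂ))
    (hgen : ∀ i, (v i₁ • X i - v i • X i₁ : MvPolynomial (Fin ν) ℂ) ∈ K) :
    ∀ (k : ℕ) (d : Fin ν →₀ ℕ), d.degree = k →
      ((v i₁)^k • (monomial d 1 : MvPolynomial (Fin ν) ℂ)
        - (d.prod fun i e => v i ^ e) • (X i₁)^k) ∈ K := by
  intro k
  induction k with
  | zero =>
    intro d hd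
    have hd0 : d = 0 := by
      rwa [Finsupp.degree_eq_zero_iff] at hd
    subst hd0
    simpa [monomial_zero'] using K.zero_mem
  | succ k IH =>
    intro d hd
    have hdne : d ≠ 0 := by
      intro h; rw [h] at hd; simp at hd
    obtain ⟨i, hi⟩ := Finsupp.support_nonempty_iff.2 hdne
    have hi' : d i ≠ 0 := Finsupp.mem_support_iff.1 hi
    set d' := d - Finsupp.single i 1 with hd'
    have hsum : d' + Finsupp.single i 1 = d :=
      tsub_add_cancel_of_le (Finsupp.single_le_iff.2 (Nat.one_le_iff_ne_zero.2 hi'))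
    have hdeg' : d'.degree = k := by
      have h2 := mydeg_add d' (Finsupp.single i 1)
      rw [hsum, mydeg_single] at h2
      omega
    have hmon : (monomial d 1 : MvPolynomial (Fin ν) ℂ) = X i * monomial d' 1 := by
      rw [← hsum, add_comm, monomial_single_add, pow_one]
    have hprod : (d.prod fun i e => v i ^ e) = v i * (d'.prod fun i e => v i ^ e) := by
      rw [← hsum, Finsupp.prod_add_index' (fun a => pow_zero (v a)) (fun a b₁ b₂ => pow_add (v a) b₁ b₂)]
      simp [Finsupp.prod_single_index, mul_comm]
    have hIH := IH d' hdeg'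
    have hQ := hgen i
    have hid : (v i₁)^(k+1) • (monomial d 1 : MvPolynomial (Fin ν) ℂ)
        - (d.prod fun i e => v i ^ e) • (X i₁)^(k+1)
        = v i₁ • (X i * ((v i₁)^k • (monomial d' 1 : MvPolynomial (Fin ν) ℂ)
            - (d'.prod fun i e => v i ^ e) • (X i₁)^k))
          + (d'.prod fun i e => v i ^ e) • ((X i₁)^k * (v i₁ • X i - v i • X i₁)) := by
      rw [hmon, hprod]
      simp only [smul_eq_C_mul, map_pow, _root_.map_mul]
      ring
    rw [hid]
    refine K.add_mem ?_ ?_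
    · rw [smul_eq_C_mul]
      exact K.mul_mem_left _ (K.mul_mem_left _ hIH)
    · rw [smul_eq_C_mul]
      exact K.mul_mem_left _ (K.mul_mem_left _ hQ)

end Helpers

section Main

open MvPolynomial Matrix

variable {ν : ℕ}

/-- Let `M` be of full rank type, `G` a nonempty finite set of squarefree monomials containing
the variable `a_{i₀}`, and `J` the ideal generated by `G`. Then: (1) if every element of `G` is
divisible by `a_{i₀}`, then `dim_ℂ (A/(J + I_M))_k = 1` for every `k ≥ 0`; (2) if some `m ∈ G`
satisfies `a_{i₀} ∤ m` and `deg m ≤ k`, then `dim_ℂ (A/(J + I_M))_k = 0`. -/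
theorem stmt8 (ν : ℕ) (hν : 3 ≤ ν) (M : Matrix (Fin (ν - 2)) (Fin ν) ℂ)
    (hM : FullRankType ν M) (i₀ : Fin ν) (G : Finset (MvPolynomial (Fin ν) ℂ))
    (hGne : G.Nonempty) (hGsq : ∀ p ∈ G, IsSqfreeMonomial p)
    (hi₀ : MvPolynomial.X i₀ ∈ G) :
    ((∀ p ∈ G, MvPolynomial.X i₀ ∣ p) →
      ∀ k : ℕ, hdim (Ideal.span (↑G : Set (MvPolynomial (Fin ν) ℂ)) + IM M) k = 1) ∧
    (∀ k : ℕ, (∃ m ∈ G, ¬ MvPolynomial.X i₀ ∣ m ∧ m.totalDegree ≤ k) →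
      hdim (Ideal.span (↑G : Set (MvPolynomial (Fin ν) ℂ)) + IM M) k = 0) := by
  classical
  obtain ⟨v, hv0, hvne, hmulv, hspan⟩ := exists_v hν M hM i₀
  obtain ⟨i₁, hi₁⟩ : ∃ i₁ : Fin ν, i₁ ≠ i₀ := by
    by_cases h : i₀ = ⟨0, by omega⟩
    · exact ⟨⟨1, by omega⟩, by rw [h]; intro hc; exact absurd (congrArg Fin.val hc) (by simp)⟩
    · exact ⟨⟨0, by omega⟩, fun hc => h hc.symm⟩
  set K : Ideal (MvPolynomial (Fin ν) ℂ) := Ideal.span (↑G) + IM M with hKdef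
  have hKsup : K = Ideal.span (↑G : Set (MvPolynomial (Fin ν) ℂ)) ⊔ IM M := by
    rw [hKdef]; rfl
  have hXK : X i₀ ∈ K := by
    rw [hKsup]; exact Ideal.mem_sup_left (Ideal.subset_span hi₀)
  have hIMK : IM M ≤ K := by rw [hKsup]; exact le_sup_right
  have hsmulK : ∀ (a : ℂ) (p : MvPolynomial (Fin ν) ℂ), p ∈ K → a • p ∈ K := fun a p hp => by
    rw [smul_eq_C_mul]; exact K.mul_mem_left _ hp
  have hgen : ∀ i, (v i₁ • X i - v i • X i₁ : MvPolynomial (Fin ν) ℂ) ∈ K := by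
    intro i
    set w : Fin ν → ℂ :=
      v i₁ • (Pi.single i (1:ℂ) : Fin ν → ℂ) - v i • (Pi.single i₁ (1:ℂ) : Fin ν → ℂ) with hwdef
    have hdot : w ⬝ᵥ v = 0 := by
      simp only [hwdef, dotProduct, Pi.sub_apply, Pi.smul_apply, Pi.single_apply,
        smul_eq_mul, mul_ite, mul_one, mul_zero, sub_mul, ite_mul, zero_mul,
        Finset.sum_sub_distrib, Finset.sum_ite_eq', Finset.mem_univ, if_pos]
      ring
    have h := hspan w hdot K hXK hIMK
    have hsum : (∑ j, w j • X j : MvPolynomial (Fin ν) ℂ) = v i₁ • X i - v i • X i₁ := by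
      simp [hwdef, Pi.single_apply, sub_smul, Finset.sum_sub_distrib, ite_smul, zero_smul,
        smul_smul, mul_ite, mul_one, mul_zero, Finset.sum_ite_eq']
    rwa [hsum] at h
  have hTk : ∀ (k : ℕ) (f : MvPolynomial (Fin ν) ℂ), f ∈ homogeneousSubmodule (Fin ν) ℂ k →
      ((v i₁)^k • f - (aeval v f) • (X i₁ : MvPolynomial (Fin ν) ℂ)^k) ∈ K := by
    intro k
    set T : MvPolynomial (Fin ν) ℂ →ₗ[ℂ] MvPolynomial (Fin ν) ℂ :=
      (v i₁ ^ k) • LinearMap.id -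
        ((aeval v : MvPolynomial (Fin ν) ℂ →ₐ[ℂ] ℂ).toLinearMap).smulRight
          ((X i₁ : MvPolynomial (Fin ν) ℂ)^k) with hTdef
    have hTapp : ∀ f, T f = (v i₁)^k • f - (aeval v f) • (X i₁ : MvPolynomial (Fin ν) ℂ)^k := by
      intro f
      simp [hTdef, LinearMap.sub_apply, LinearMap.smul_apply, LinearMap.smulRight_apply]
    have hle := span_mono k (Submodule.comap T (Submodule.restrictScalars ℂ K)) ?_
    · intro f hf
      have h := hle hf
      rw [Submodule.mem_comap, hTapp] at h
      exact h
    · intro d hd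
      rw [Submodule.mem_comap, hTapp]
      have h := keyB v i₁ K hgen k d hd
      have he : aeval v ((monomial d 1 : MvPolynomial (Fin ν) ℂ)) = d.prod fun i e => v i ^ e := by
        rw [aeval_monomial, _root_.map_one, one_mul]
      rw [he]
      exact h
  constructor
  · -- part (1)
    intro hdvd k
    set E : MvPolynomial (Fin ν) ℂ →ₗ[ℂ] ℂ :=
      (aeval v : MvPolynomial (Fin ν) ℂ →ₐ[ℂ] ℂ).toLinearMap with hEdef
    have hEapp : ∀ f, E f = aeval v f := fun f => rfl
    have hKker : ∀ f ∈ K, aeval v f = 0 := by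
      have h1 : Ideal.span (↑G : Set (MvPolynomial (Fin ν) ℂ)) ≤
          RingHom.ker (aeval v : MvPolynomial (Fin ν) ℂ →ₐ[ℂ] ℂ) := by
        rw [Ideal.span_le]
        intro p hp
        obtain ⟨q, hq⟩ := hdvd p hp
        have : aeval v p = 0 := by rw [hq, _root_.map_mul, aeval_X, hv0, zero_mul]
        simpa [RingHom.mem_ker] using this
      have h2 : IM M ≤ RingHom.ker (aeval v : MvPolynomial (Fin ν) ℂ →ₐ[ℂ] ℂ) := by
        rw [IM, Ideal.span_le]
        rintro _ ⟨j, rfl⟩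
        have : aeval v (∑ i, C (M j i) * X i : MvPolynomial (Fin ν) ℂ) = 0 := by
          rw [map_sum]
          have : ∀ i, aeval v (C (M j i) * X i : MvPolynomial (Fin ν) ℂ) = M j i * v i := by
            intro i
            rw [_root_.map_mul, aeval_X, aeval_C]
            simp
          rw [Finset.sum_congr rfl (fun i _ => this i)]
          simpa [Matrix.mulVec, dotProduct] using congrFun hmulv j
        simpa [RingHom.mem_ker] using this
      intro f hf
      rw [hKsup] at hf
      have := sup_le h1 h2 hf
      simpa [RingHom.mem_ker] using this
    have hXpowS : (X i₁ : MvPolynomial (Fin ν) ℂ)^k ∈ homogeneousSubmodule (Fin ν) ℂ k := by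
      rw [mem_homogeneousSubmodule]
      simpa using (isHomogeneous_X ℂ i₁).pow k
    have hKS : Submodule.restrictScalars ℂ K ⊓ homogeneousSubmodule (Fin ν) ℂ k
        = LinearMap.ker E ⊓ homogeneousSubmodule (Fin ν) ℂ k := by
      apply le_antisymm
      · rintro f ⟨hf1, hf2⟩
        exact ⟨LinearMap.mem_ker.2 (hKker f hf1), hf2⟩
      · rintro f ⟨hf1, hf2⟩
        refine ⟨?_, hf2⟩
        have h := hTk k f hf2
        have hf1' : aeval v f = 0 := LinearMap.mem_ker.1 hf1
        rw [hf1', zero_smul, sub_zero] at h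
        have h2 := hsmulK (v i₁ ^ k)⁻¹ _ h
        rwa [inv_smul_smul₀ (pow_ne_zero _ (hvne i₁ hi₁))] at h2
    set S := homogeneousSubmodule (Fin ν) ℂ k with hSdef
    set Lk : S →ₗ[ℂ] ℂ := E ∘ₗ S.subtype with hLkdef
    have hrange : LinearMap.range Lk = ⊤ := by
      rw [eq_top_iff]
      intro x _
      refine ⟨⟨(x * (v i₁ ^ k)⁻¹) • (X i₁ : MvPolynomial (Fin ν) ℂ)^k,
        Submodule.smul_mem _ _ hXpowS⟩, ?_⟩
      show E ((x * (v i₁ ^ k)⁻¹) • (X i₁ : MvPolynomial (Fin ν) ℂ)^k) = x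
      rw [_root_.map_smul, hEapp]
      have hE1 : aeval v ((X i₁ : MvPolynomial (Fin ν) ℂ)^k) = v i₁ ^ k := by
        rw [map_pow, aeval_X]
      rw [hE1, smul_eq_mul]
      have hne := pow_ne_zero k (hvne i₁ hi₁)
      field_simp
    have hrk := LinearMap.finrank_range_add_finrank_ker Lk
    rw [hrange, finrank_top, Module.finrank_self] at hrk
    have hker1 : LinearMap.ker Lk = Submodule.comap S.subtype (LinearMap.ker E ⊓ S) := by
      rw [Submodule.comap_inf, Submodule.comap_subtype_self, inf_top_eq, hLkdef,
        LinearMap.ker_comp]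
    have hker2 : Module.finrank ℂ (LinearMap.ker E ⊓ S : Submodule ℂ (MvPolynomial (Fin ν) ℂ))
        = Module.finrank ℂ (LinearMap.ker Lk) := by
      rw [hker1]
      exact (Submodule.comapSubtypeEquivOfLe inf_le_right).finrank_eq.symm
    have hpos : 0 < Module.finrank ℂ S := by
      rw [Module.finrank_pos_iff]
      refine nontrivial_of_ne ⟨_, hXpowS⟩ 0 ?_
      intro hcon
      have : (X i₁ : MvPolynomial (Fin ν) ℂ)^k = 0 := congrArg Subtype.val hcon
      exact pow_ne_zero _ (X_ne_zero _) this
    unfold hdim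
    rw [← hSdef, hKS, hker2]
    omega
  · -- part (2)
    intro k hex
    obtain ⟨m, hmG, hndvd, hdeg⟩ := hex
    obtain ⟨T', hT'⟩ := hGsq m hmG
    have hmK : m ∈ K := by
      rw [hKsup]; exact Ideal.mem_sup_left (Ideal.subset_span hmG)
    have hi₀T : i₀ ∉ T' := fun h => hndvd (by rw [hT']; exact Finset.dvd_prod_of_mem _ h)
    have hhom : m.IsHomogeneous T'.card := by
      rw [hT']
      simpa using IsHomogeneous.prod T' (fun i => (X i : MvPolynomial (Fin ν) ℂ)) (fun _ => 1)
        (fun i _ => isHomogeneous_X ℂ i)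
    have hmne : m ≠ 0 := by
      rw [hT']; exact Finset.prod_ne_zero_iff.2 (fun i _ => X_ne_zero _)
    have htd : m.totalDegree = T'.card := hhom.totalDegree hmne
    have hdk : T'.card ≤ k := by rw [htd] at hdeg; exact hdeg
    have hmS : m ∈ homogeneousSubmodule (Fin ν) ℂ T'.card := hhom
    have haev : aeval v m = ∏ i ∈ T', v i := by
      rw [hT', _root_.map_prod]
      exact Finset.prod_congr rfl (fun i _ => aeval_X v i)
    have hane : aeval v m ≠ 0 := by
      rw [haev]
      exact Finset.prod_ne_zero_iff.2 (fun i hiT => hvne i (fun h => hi₀T (h ▸ hiT)))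
    have h1 := hTk T'.card m hmS
    have h2 : (aeval v m) • (X i₁ : MvPolynomial (Fin ν) ℂ)^T'.card ∈ K := by
      have h3 := K.sub_mem (hsmulK (v i₁ ^ T'.card) m hmK) h1
      rwa [sub_sub_cancel] at h3
    have hXd : (X i₁ : MvPolynomial (Fin ν) ℂ)^T'.card ∈ K := by
      have h4 := hsmulK (aeval v m)⁻¹ _ h2
      rwa [inv_smul_smul₀ hane] at h4
    have hXk : (X i₁ : MvPolynomial (Fin ν) ℂ)^k ∈ K := by
      have h5 : (X i₁ : MvPolynomial (Fin ν) ℂ)^k = X i₁^(k - T'.card) * X i₁^T'.card := by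
        rw [← pow_add, Nat.sub_add_cancel hdk]
      rw [h5]; exact K.mul_mem_left _ hXd
    have hSK : homogeneousSubmodule (Fin ν) ℂ k ≤ Submodule.restrictScalars ℂ K := by
      intro f hf
      have h := hTk k f hf
      have h2' : (v i₁ ^ k) • f ∈ K := by
        have h6 := K.add_mem h (hsmulK (aeval v f) _ hXk)
        rwa [sub_add_cancel] at h6
      have h7 := hsmulK (v i₁ ^ k)⁻¹ _ h2'
      rwa [inv_smul_smul₀ (pow_ne_zero _ (hvne i₁ hi₁))] at h7
    have hEq : Submodule.restrictScalars ℂ K ⊓ homogeneousSubmodule (Fin ν) ℂ k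
        = homogeneousSubmodule (Fin ν) ℂ k := inf_eq_right.2 hSK
    unfold hdim
    rw [hEq, Nat.sub_self]
end Main
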